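/- Let (T,η,μ) be a monad on a category C with Eilenberg–Moore adjunction F ⊣ U : C ⇄ EM(T) and adjoint transpose (−)♯, and suppose T maps reflexive coequalisers to epimorphisms. If i : B → UC (for B in C and C a T-algebra) is such that U(i♯) : TB → UC is a reflexive coequaliser in C of a pair q₁, q₂ : A → TB, then i♯ : FB → C is a reflexive coequaliser in EM(T) of the pair q₁♯, q₂♯ : FA → FB. -/

import Mathlib

open CategoryTheory CategoryTheory.Limits

universe v u

namespace TreeAutPaper

variable {C : Type u} [Category.{v} C]

/-- The adjoint transpose `f♯ : FX ⟶ Y` of `f : X ⟶ UY` for the free–forgetful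
adjunction of the Eilenberg–Moore category of a monad. -/
def transpose (T : Monad C) {X : C} {Y : T.Algebra} (f : X ⟶ Y.A) : T.free.obj X ⟶ Y :=
  ((Monad.adj T).homEquiv X Y).symm f

/-- `T` maps reflexive coequalisers to epimorphisms. -/
def MapsReflexiveCoequalizersToEpis (S : C ⥤ C) : Prop :=
  ∀ {A B X : C} (f g : A ⟶ B) (c : B ⟶ X) (w : f ≫ c = g ≫ c),
    IsReflexivePair f g → Nonempty (IsColimit (Cofork.ofπ c w)) → Epi (S.map c)

/-- `S` preserves reflexive coequalisers. -/
def PreservesReflexiveCoequalizersProp (S : C ⥤ C) : Prop :=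
  ∀ {A B X : C} (f g : A ⟶ B) (c : B ⟶ X) (w : f ≫ c = g ≫ c),
    IsReflexivePair f g → Nonempty (IsColimit (Cofork.ofπ c w)) →
      Nonempty (IsColimit (Cofork.ofπ (S.map c)
        (show S.map f ≫ S.map c = S.map g ≫ S.map c by
          rw [← S.map_comp, ← S.map_comp, w])))

/-- `(R, p₁, p₂)` is the Nerode equivalence of the language `L : TI ⟶ O`. -/
def IsNerode (T : Monad C) {I O : C} (L : (T : C ⥤ C).obj I ⟶ O)
    (R : C) (p₁ p₂ : R ⟶ (T : C ⥤ C).obj I) : Prop :=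
  ((T : C ⥤ C).map p₁ ≫ T.μ.app I ≫ L = (T : C ⥤ C).map p₂ ≫ T.μ.app I ≫ L) ∧
    ∀ (S : C) (q₁ q₂ : S ⟶ (T : C ⥤ C).obj I), IsReflexivePair q₁ q₂ →
      (T : C ⥤ C).map q₁ ≫ T.μ.app I ≫ L = (T : C ⥤ C).map q₂ ≫ T.μ.app I ≫ L →
      ∃! u : S ⟶ R, u ≫ p₁ = q₁ ∧ u ≫ p₂ = q₂

variable (T : Monad C)

/-- A `T`-automaton: an Eilenberg–Moore algebra together with initial and final
state morphisms. -/
structure TAut (I O : C) where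
  Q : T.Algebra
  i : I ⟶ Q.A
  o : Q.A ⟶ O

variable {T} {I O : C}

/-- The reachability map of a `T`-automaton. -/
def TAut.rch (A : TAut T I O) : (T : C ⥤ C).obj I ⟶ A.Q.A :=
  (transpose T A.i).f

/-- The language of a `T`-automaton. -/
def TAut.lang (A : TAut T I O) : (T : C ⥤ C).obj I ⟶ O :=
  A.rch ≫ A.o

/-- `h` is a homomorphism of `T`-automata from `A` to `B`. -/
structure IsTAutHom (A B : TAut T I O) (h : A.Q.A ⟶ B.Q.A) : Prop where
  alg : (T : C ⥤ C).map h ≫ B.Q.a = A.Q.a ≫ h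
  hi : A.i ≫ h = B.i
  ho : h ≫ B.o = A.o

/-- A `T`-automaton is reachable if its reachability map is a reflexive
regular epimorphism, i.e. a coequaliser of a reflexive pair. -/
def TAut.Reachable (A : TAut T I O) : Prop :=
  ∃ (S : C) (q₁ q₂ : S ⟶ (T : C ⥤ C).obj I),
    IsReflexivePair q₁ q₂ ∧
      ∃ w : q₁ ≫ A.rch = q₂ ≫ A.rch, Nonempty (IsColimit (Cofork.ofπ A.rch w))

/-- A `T`-automaton is minimal if it is reachable and every reachable `T`-automaton
with the same language admits a (necessarily unique) homomorphism into it. -/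
def TAut.Minimal (A : TAut T I O) : Prop :=
  A.Reachable ∧ ∀ B : TAut T I O, B.Reachable → B.lang = A.lang →
    ∃! h : B.Q.A ⟶ A.Q.A, IsTAutHom B A h


lemma transpose_f' (T : Monad C) {X : C} {Y : T.Algebra} (f : X ⟶ Y.A) :
    (transpose T f).f = T.map f ≫ Y.a := by
  unfold transpose; erw [Adjunction.homEquiv_counit]
  simp
  erw [Monad.Algebra.comp_f]
  rfl

lemma free_map_transpose' (T : Monad C) {X X' : C} {Y : T.Algebra} (g : X' ⟶ X) (f : X ⟶ Y.A) :
    T.free.map g ≫ transpose T f = transpose T (g ≫ f) :=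
  ((Monad.adj T).homEquiv_naturality_left_symm g f).symm

lemma transpose_comp' (T : Monad C) {X : C} {Y Z : T.Algebra} (f : X ⟶ Y.A) (h : Y ⟶ Z) :
    transpose T f ≫ h = transpose T (f ≫ h.f) :=
  ((Monad.adj T).homEquiv_naturality_right_symm f h).symm

lemma transpose_eta' (T : Monad C) (B : C) :
    transpose T (Y := T.free.obj B) (T.η.app B) = 𝟙 (T.free.obj B) := by
  apply Monad.Algebra.Hom.ext
  erw [transpose_f']
  exact T.right_unit B

/-- Suppose `T` maps reflexive coequalisers to epimorphisms. If
`i : B ⟶ UC` is such that `U(i♯)` is a reflexive coequaliser of the pair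
`q₁, q₂ : A ⟶ TB` in `C`, then `i♯ : FB ⟶ C` is a reflexive coequaliser of the pair
of transposes `q₁♯, q₂♯ : FA ⟶ FB` in the Eilenberg–Moore category. -/
theorem transpose_reflexive_coequalizer
    {C : Type u} [Category.{v} C] (T : Monad C)
    (hT : MapsReflexiveCoequalizersToEpis (T : C ⥤ C))
    {A B : C} {X : T.Algebra} (i : B ⟶ X.A)
    (q₁ q₂ : A ⟶ (T : C ⥤ C).obj B) (hrefl : IsReflexivePair q₁ q₂)
    (w : q₁ ≫ (transpose T i).f = q₂ ≫ (transpose T i).f)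
    (hcoeq : Nonempty (IsColimit (Cofork.ofπ (transpose T i).f w))) :
    IsReflexivePair (transpose T (Y := T.free.obj B) q₁)
        (transpose T (Y := T.free.obj B) q₂) ∧
      ∃ w' : transpose T (Y := T.free.obj B) q₁ ≫ transpose T i =
          transpose T (Y := T.free.obj B) q₂ ≫ transpose T i,
        Nonempty (IsColimit (Cofork.ofπ (transpose T i) w')) := by
  obtain ⟨hc⟩ := hcoeq
  set e : (T : C ⥤ C).obj B ⟶ X.A := (transpose T i).f with he
  -- Part 1: the transposes form a reflexive pair
  obtain ⟨sec, hs1, hs2⟩ := hrefl.common_section'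
  have hrefl' : IsReflexivePair (transpose T (Y := T.free.obj B) q₁)
      (transpose T (Y := T.free.obj B) q₂) := by
    refine IsReflexivePair.mk' (T.free.map (T.η.app B ≫ sec)) ?_ ?_
    · erw [free_map_transpose', Category.assoc, hs1, Category.comp_id, transpose_eta']
    · erw [free_map_transpose', Category.assoc, hs2, Category.comp_id, transpose_eta']
  refine ⟨hrefl', ?_, ?_⟩
  · erw [transpose_comp', transpose_comp', w]
    rfl
  -- Part 3: the colimit
  have hepi : Epi ((T : C ⥤ C).map e) := hT q₁ q₂ e w hrefl ⟨hc⟩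
  have htr : (T : C ⥤ C).map e ≫ X.a = T.μ.app B ≫ e := (transpose T i).h
  constructor
  refine Cofork.IsColimit.mk' _ fun s => ?_
  have condf : ((transpose T (Y := T.free.obj B) q₁) ≫ s.π).f
      = ((transpose T (Y := T.free.obj B) q₂) ≫ s.π).f := by rw [s.condition]
  have hπh : (T : C ⥤ C).map s.π.f ≫ s.pt.a = T.μ.app B ≫ s.π.f := s.π.h
  have key : ∀ q : A ⟶ (T : C ⥤ C).obj B,
      q ≫ s.π.f = T.η.app A ≫ (T : C ⥤ C).map q ≫ T.μ.app B ≫ s.π.f := by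
    intro q
    rw [← T.η.naturality_assoc q]
    simp
    erw [T.left_unit_assoc]
  have hq : q₁ ≫ s.π.f = q₂ ≫ s.π.f := by
    have c1 : (T : C ⥤ C).map q₁ ≫ T.μ.app B ≫ s.π.f
        = (T : C ⥤ C).map q₂ ≫ T.μ.app B ≫ s.π.f := by
      have := condf
      simp only [Monad.Algebra.comp_f] at this
      erw [transpose_f', transpose_f'] at this
      erw [Category.assoc, Category.assoc] at this
      exact this
    rw [key, key, c1]
  set u : X.A ⟶ s.pt.A := hc.desc (Cofork.ofπ s.π.f hq) with hudef
  have hu : e ≫ u = s.π.f := by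
    exact hc.fac (Cofork.ofπ s.π.f hq) WalkingParallelPair.one
  have alg : (T : C ⥤ C).map u ≫ s.pt.a = X.a ≫ u := by
    have h1 : (T : C ⥤ C).map e ≫ (T : C ⥤ C).map u ≫ s.pt.a
        = T.μ.app B ≫ s.π.f := by
      rw [← Functor.map_comp_assoc, hu]
      exact hπh
    have h2 : (T : C ⥤ C).map e ≫ X.a ≫ u = T.μ.app B ≫ s.π.f := by
      rw [reassoc_of% htr, hu]
    exact (cancel_epi ((T : C ⥤ C).map e)).1 (h1.trans h2.symm)
  refine ⟨⟨u, alg⟩, ?_, ?_⟩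
  · apply Monad.Algebra.Hom.ext
    exact hu
  · intro m hm
    apply Monad.Algebra.Hom.ext
    apply Cofork.IsColimit.hom_ext hc
    have hmf : e ≫ m.f = s.π.f := by
      have := congrArg Monad.Algebra.Hom.f hm
      simp at this
      exact this
    exact hmf.trans hu.symm

end TreeAutPaper
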